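/- Let Φ be the non-selective measurement channel associated with a complete family of pairwise orthogonal projections {P_a} on ℂ^n, let ρ be a quantum state on ℂ^n, let d ≥ 1, and let p ≥ 1 be real. Then ‖ρ ⊗ E₀₀ − Φ(ρ) ⊗ (1_d/d)‖_p^p = ‖ρ − Φ(ρ)/d‖_p^p + ((d−1)/d^p) · ‖Φ(ρ)‖_p^p. -/

import Mathlib

open Matrix Kronecker
open scoped ComplexOrder

noncomputable section

variable {n : Type*} [Fintype n] [DecidableEq n]

/-- The positive semidefinite square root of a positive semidefinite matrix (removed from
Mathlib; restated with its December 2024 definition). -/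
def Matrix.PosSemidef.sqrt {𝕜 : Type*} [RCLike 𝕜] {m : Type*} [Fintype m] [DecidableEq m]
    {A : Matrix m m 𝕜} (hA : A.PosSemidef) : Matrix m m 𝕜 :=
  hA.1.eigenvectorUnitary.1 * diagonal ((↑) ∘ (√·) ∘ hA.1.eigenvalues) *
  (star hA.1.eigenvectorUnitary : Matrix m m 𝕜)

/-- `|X| = (X† X)^{1/2}`, the positive semidefinite absolute value of a matrix. -/
def matAbs (X : Matrix n n ℂ) : Matrix n n ℂ :=
  (Matrix.posSemidef_conjTranspose_mul_self X).sqrt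

/-- `Tr |X|^p`, with the `p`-th power taken through the functional calculus. -/
def traceAbsPow (p : ℝ) (X : Matrix n n ℂ) : ℝ :=
  (Matrix.trace (cfc (fun x : ℝ => x ^ p) (matAbs X))).re

/-- The Schatten `p`-norm `‖X‖_p = (Tr |X|^p)^(1/p)`. -/
def schatten (p : ℝ) (X : Matrix n n ℂ) : ℝ :=
  (traceAbsPow p X) ^ (1 / p)

/-- Matrix square root via the functional calculus (agrees with the positive semidefinite
square root on positive semidefinite matrices). -/
def msqrt (X : Matrix n n ℂ) : Matrix n n ℂ := cfc Real.sqrt X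

/-- Matrix natural logarithm via the functional calculus. -/
def mlog (X : Matrix n n ℂ) : Matrix n n ℂ := cfc Real.log X

/-- Von Neumann entropy `S(ρ) = -Tr(ρ log ρ)`. -/
def vnEntropy (ρ : Matrix n n ℂ) : ℝ := -(Matrix.trace (ρ * mlog ρ)).re

/-- Relative entropy `S(ρ‖σ) = Tr(ρ log ρ) - Tr(ρ log σ)`. -/
def relEnt (ρ σ : Matrix n n ℂ) : ℝ :=
  (Matrix.trace (ρ * mlog ρ)).re - (Matrix.trace (ρ * mlog σ)).re

/-- Uhlmann fidelity `F(ρ,σ) = (Tr|√σ √ρ|)²`. -/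
def fidelity (ρ σ : Matrix n n ℂ) : ℝ :=
  ((Matrix.trace (matAbs (msqrt σ * msqrt ρ))).re) ^ 2

/-- Partial trace over the second factor. -/
def ptraceE {S E : Type*} [Fintype E] (Ω : Matrix (S × E) (S × E) ℂ) : Matrix S S ℂ :=
  Matrix.of fun s s' => ∑ e, Ω (s, e) (s', e)

/-- Partial trace over the first factor. -/
def ptraceS {S E : Type*} [Fintype S] (Ω : Matrix (S × E) (S × E) ℂ) : Matrix E E ℂ :=
  Matrix.of fun e e' => ∑ s, Ω (s, e) (s, e')

section AuxCfc

open Topology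

variable {m : Type*} [Fintype m] [DecidableEq m]

private lemma diag_add' (F G : m → ℂ) :
    Matrix.diagonal (F + G) = Matrix.diagonal F + Matrix.diagonal G := by
  ext i j
  rcases eq_or_ne i j with rfl | h
  · simp
  · simp [Matrix.diagonal_apply_ne _ h]

private lemma star_diag_ofReal (w : m → ℝ) :
    star (Matrix.diagonal ((↑) ∘ w : m → ℂ)) = Matrix.diagonal ((↑) ∘ w : m → ℂ) := by
  ext i j
  rcases eq_or_ne i j with rfl | h
  · simp [Matrix.star_apply, Complex.conj_ofReal]
  · simp [Matrix.star_apply, Matrix.diagonal_apply_ne _ h, Matrix.diagonal_apply_ne _ h.symm]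

private lemma star_conj_diag (U : Matrix m m ℂ) (w : m → ℝ) :
    star (U * Matrix.diagonal ((↑) ∘ w : m → ℂ) * star U)
      = U * Matrix.diagonal ((↑) ∘ w : m → ℂ) * star U := by
  calc star (U * Matrix.diagonal ((↑) ∘ w : m → ℂ) * star U)
      = star (star U) * (star (Matrix.diagonal ((↑) ∘ w : m → ℂ)) * star U) := by
        rw [StarMul.star_mul, StarMul.star_mul]
    _ = U * Matrix.diagonal ((↑) ∘ w : m → ℂ) * star U := by
        rw [star_star, star_diag_ofReal, ← mul_assoc]

private lemma conj_diag_mul (U : Matrix m m ℂ) (hU1 : star U * U = 1)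
    (w₁ w₂ : m → ℂ) :
    (U * Matrix.diagonal w₁ * star U) * (U * Matrix.diagonal w₂ * star U)
      = U * Matrix.diagonal (w₁ * w₂) * star U := by
  have h : Matrix.diagonal w₁ * (star U * U) * Matrix.diagonal w₂ = Matrix.diagonal (w₁ * w₂) := by
    rw [hU1, mul_one, Matrix.diagonal_mul_diagonal]
    rfl
  calc (U * Matrix.diagonal w₁ * star U) * (U * Matrix.diagonal w₂ * star U)
      = U * (Matrix.diagonal w₁ * (star U * U) * Matrix.diagonal w₂) * star U := by
        simp only [mul_assoc]
    _ = U * Matrix.diagonal (w₁ * w₂) * star U := by rw [h]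

set_option maxHeartbeats 1000000 in
/-- `cfc` of a unitary conjugate of a real diagonal matrix. -/
lemma cfc_conj_diagonal (U : Matrix m m ℂ) (hU : U ∈ Matrix.unitaryGroup m ℂ)
    (v : m → ℝ) (f : ℝ → ℝ) :
    cfc f (U * Matrix.diagonal ((↑) ∘ v : m → ℂ) * star U)
      = U * Matrix.diagonal ((↑) ∘ f ∘ v : m → ℂ) * star U := by
  have hU1 : star U * U = 1 := hU.1
  have hU2 : U * star U = 1 := hU.2
  set A := U * Matrix.diagonal ((↑) ∘ v : m → ℂ) * star U with hAdef
  have hspec : spectrum ℝ A = Set.range v := by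
    have hrw : A = ((⟨U, hU⟩ : unitary (Matrix m m ℂ)) : Matrix m m ℂ) *
        Matrix.diagonal ((↑) ∘ v : m → ℂ) *
        ((star (⟨U, hU⟩ : unitary (Matrix m m ℂ)) : Matrix m m ℂ)) := rfl
    ext x
    rw [hrw, Unitary.spectrum_star_right_conjugate, ← spectrum.algebraMap_mem_iff ℂ,
      spectrum_diagonal]
    constructor
    · rintro ⟨i, hi⟩
      refine ⟨i, ?_⟩
      have : ((v i : ℂ)) = (x : ℂ) := by simpa [Complex.coe_algebraMap] using hi
      exact_mod_cast this
    · rintro ⟨i, rfl⟩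
      exact ⟨i, by simp [Complex.coe_algebraMap]⟩
  let e : m → spectrum ℝ A := fun i => ⟨v i, hspec ▸ Set.mem_range_self i⟩
  let ψ : C(spectrum ℝ A, ℝ) →⋆ₐ[ℝ] Matrix m m ℂ :=
  { toFun := fun g => U * Matrix.diagonal ((↑) ∘ g ∘ e : m → ℂ) * star U
    map_one' := by
      have h1 : ((↑) ∘ (1 : C(spectrum ℝ A, ℝ)) ∘ e : m → ℂ) = fun _ => 1 := by
        funext i; simp
      simp only [h1]
      rw [show Matrix.diagonal (fun _ : m => (1 : ℂ)) = (1 : Matrix m m ℂ) from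
        Matrix.diagonal_one, mul_one, hU2]
    map_mul' := fun f g => by
      have h1 : ((↑) ∘ (f * g : C(spectrum ℝ A, ℝ)) ∘ e : m → ℂ)
          = ((↑) ∘ f ∘ e : m → ℂ) * ((↑) ∘ g ∘ e : m → ℂ) := by
        funext i; simp
      simp only [h1]
      exact (conj_diag_mul U hU1 _ _).symm
    map_zero' := by
      have h1 : ((↑) ∘ (0 : C(spectrum ℝ A, ℝ)) ∘ e : m → ℂ) = fun _ => 0 := by
        funext i; simp
      simp only [h1]
      rw [show Matrix.diagonal (fun _ : m => (0 : ℂ)) = (0 : Matrix m m ℂ) from by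
        simpa using Matrix.diagonal_zero]
      simp
    map_add' := fun f g => by
      have h1 : ((↑) ∘ (f + g : C(spectrum ℝ A, ℝ)) ∘ e : m → ℂ)
          = ((↑) ∘ f ∘ e : m → ℂ) + ((↑) ∘ g ∘ e : m → ℂ) := by
        funext i; simp
      simp only [h1, diag_add', mul_add, add_mul]
    commutes' := fun r => by
      have h1 : ((↑) ∘ (algebraMap ℝ C(spectrum ℝ A, ℝ) r) ∘ e : m → ℂ)
          = fun _ => (r : ℂ) := by
        funext i; simp [algebraMap_apply]
      have h2 : Matrix.diagonal (fun _ : m => (r : ℂ)) = (r : ℂ) • (1 : Matrix m m ℂ) := by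
        ext i j
        rcases eq_or_ne i j with rfl | h
        · simp
        · simp [Matrix.diagonal_apply_ne _ h, Matrix.one_apply_ne h]
      simp only [h1, h2, Matrix.mul_smul, Matrix.smul_mul, mul_one, hU2]
      rw [Algebra.algebraMap_eq_smul_one]
      ext i j
      simp [Complex.real_smul]
    map_star' := fun g => by
      simp only [star_trivial]
      exact (star_conj_diag U _).symm }
  have hψ : ∀ g : C(spectrum ℝ A, ℝ),
      ψ g = U * Matrix.diagonal ((↑) ∘ g ∘ e : m → ℂ) * star U := fun _ => rfl
  have hcl : IsClosedEmbedding ψ := by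
    have h0 : FiniteDimensional ℝ C(spectrum ℝ A, ℝ) :=
      FiniteDimensional.of_injective (ContinuousMap.coeFnLinearMap ℝ (M := ℝ))
        DFunLike.coe_injective
    refine LinearMap.isClosedEmbedding_of_injective (𝕜 := ℝ) (E := C(spectrum ℝ A, ℝ))
      (F := Matrix m m ℂ) (f := ψ) <| LinearMap.ker_eq_bot'.mpr fun g hg ↦ ?_
    have hg' : U * Matrix.diagonal ((↑) ∘ g ∘ e : m → ℂ) * star U = 0 := hg
    have h2 : Matrix.diagonal ((↑) ∘ g ∘ e : m → ℂ) = (0 : Matrix m m ℂ) := by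
      calc Matrix.diagonal ((↑) ∘ g ∘ e : m → ℂ)
          = (star U * U) * Matrix.diagonal ((↑) ∘ g ∘ e : m → ℂ) * (star U * U) := by
            rw [hU1, one_mul, mul_one]
        _ = star U * (U * Matrix.diagonal ((↑) ∘ g ∘ e : m → ℂ) * star U) * U := by
            simp only [mul_assoc]
        _ = 0 := by rw [hg']; simp
    ext x
    simp only [ContinuousMap.zero_apply]
    obtain ⟨x, hx⟩ := x
    obtain ⟨i, rfl⟩ := hspec ▸ hx
    rw [← Matrix.diagonal_zero] at h2
    have := (Matrix.diagonal_eq_diagonal_iff).mp h2 i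
    simpa [e] using this
  have hfun : ((↑) ∘ (ContinuousMap.restrict (spectrum ℝ A) (ContinuousMap.id ℝ)) ∘ e : m → ℂ)
      = ((↑) ∘ v : m → ℂ) := by
    funext i; simp [e]
  have hid : ψ (ContinuousMap.restrict (spectrum ℝ A) (ContinuousMap.id ℝ)) = A := by
    rw [hψ, hfun, hAdef]
  have hsa : _root_.IsSelfAdjoint A := by
    show star A = A
    rw [hAdef]
    exact star_conj_diag U v
  have hkey := cfcHom_eq_of_continuous_of_map_id hsa ψ hcl.continuous hid
  rw [cfc_apply f A hsa (by rw [continuousOn_iff_continuous_restrict]; fun_prop), hkey, hψ]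
  simp only [ContinuousMap.coe_mk, Function.comp_def, Set.restrict_apply]
  rfl

private lemma trace_conj_diag (U : Matrix m m ℂ) (hU1 : star U * U = 1) (w : m → ℂ) :
    (U * Matrix.diagonal w * star U).trace = ∑ i, w i := by
  rw [Matrix.trace_mul_cycle, hU1, one_mul, Matrix.trace_diagonal]

/-- Trace of `|X|^p` for a unitarily diagonalized `X`. -/
lemma traceAbsPow_conj_diagonal (U : Matrix m m ℂ) (hU : U ∈ Matrix.unitaryGroup m ℂ)
    (v : m → ℝ) (p : ℝ) {X : Matrix m m ℂ}
    (hX : X = U * Matrix.diagonal ((↑) ∘ v : m → ℂ) * star U) :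
    traceAbsPow p X = ∑ i, |v i| ^ p := by
  have hU1 : star U * U = 1 := hU.1
  have habs : matAbs X = U * Matrix.diagonal ((↑) ∘ (fun i => |v i|) : m → ℂ) * star U := by
    set S := U * Matrix.diagonal ((↑) ∘ (fun i => |v i|) : m → ℂ) * star U with hS
    have hSpsd : S.PosSemidef := by
      rw [hS, Matrix.star_eq_conjTranspose]
      exact Matrix.PosSemidef.mul_mul_conjTranspose_same
        (Matrix.posSemidef_diagonal_iff.mpr fun i => by
          simpa using Complex.zero_le_real.mpr (abs_nonneg (v i))) U
    have hXh : Xᴴ = X := by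
      rw [← Matrix.star_eq_conjTranspose, hX]
      exact star_conj_diag U v
    have hhv : (((↑) ∘ (fun i => |v i|) : m → ℂ) * ((↑) ∘ (fun i => |v i|) : m → ℂ))
        = (((↑) ∘ v : m → ℂ) * ((↑) ∘ v : m → ℂ)) := by
      funext i
      simp only [Pi.mul_apply, Function.comp_apply, ← Complex.ofReal_mul]
      rw [abs_mul_abs_self]
    have hsq : S ^ 2 = Xᴴ * X := by
      rw [hXh, hX, sq, hS, conj_diag_mul U hU1, conj_diag_mul U hU1, hhv]
    have hmat : matAbs X = cfc Real.sqrt (Xᴴ * X) := by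
      have hH := (Matrix.posSemidef_conjTranspose_mul_self X).1
      have hs : Xᴴ * X = (hH.eigenvectorUnitary : Matrix m m ℂ) *
          Matrix.diagonal ((↑) ∘ hH.eigenvalues : m → ℂ) * star (hH.eigenvectorUnitary : Matrix m m ℂ) :=
        hH.spectral_theorem
      conv_rhs => rw [hs]
      rw [cfc_conj_diagonal _ hH.eigenvectorUnitary.2]
      rfl
    have hsq' : Xᴴ * X = U * Matrix.diagonal ((↑) ∘ (fun i => |v i| * |v i|) : m → ℂ) * star U := by
      rw [← hsq, sq, hS, conj_diag_mul U hU1]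
      congr 2
      congr 1
      funext i
      simp only [Pi.mul_apply, Function.comp_apply, ← Complex.ofReal_mul, abs_mul_abs_self]
    rw [hmat, hsq', cfc_conj_diagonal U hU _ Real.sqrt]
    congr 2
    congr 1
    funext i
    simp [Real.sqrt_mul_self_eq_abs]
  rw [traceAbsPow, habs, cfc_conj_diagonal U hU _ (fun x : ℝ => x ^ p),
    trace_conj_diag U hU1]
  rw [show (∑ i, (((↑) ∘ (fun x : ℝ => x ^ p) ∘ fun i => |v i|) i : ℂ))
      = ((∑ i, |v i| ^ p : ℝ) : ℂ) from by push_cast; rfl]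
  exact Complex.ofReal_re _

private lemma kron_conjTranspose {l o : Type*} (A : Matrix l l ℂ) (B : Matrix o o ℂ) :
    (A ⊗ₖ B)ᴴ = Aᴴ ⊗ₖ Bᴴ := by
  ext ⟨i, j⟩ ⟨k, l⟩
  simp [Matrix.conjTranspose_apply, star_mul', mul_comm]

end AuxCfc

private lemma schatten_rpow_eq {m : Type*} [Fintype m] [DecidableEq m]
    {p : ℝ} (hp0 : p ≠ 0) (X : Matrix m m ℂ) {t : ℝ} (ht : traceAbsPow p X = t)
    (htn : 0 ≤ t) : schatten p X ^ p = t := by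
  rw [schatten, ht, ← Real.rpow_mul htn, one_div_mul_cancel hp0, Real.rpow_one]

/-- `‖ρ ⊗ E₀₀ - Φ(ρ) ⊗ 1_d/d‖_p^p = ‖ρ - Φ(ρ)/d‖_p^p + ((d-1)/d^p) ‖Φ(ρ)‖_p^p`. -/
theorem schatten_pow_kron_e00_sub_measured_mixed
    {n ι : Type*} [Fintype n] [DecidableEq n] [Fintype ι]
    (P : ι → Matrix n n ℂ)
    (hproj : ∀ a, P a * P a = P a)
    (hherm : ∀ a, (P a)ᴴ = P a)
    (horth : ∀ a b, a ≠ b → P a * P b = 0)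
    (hsum : ∑ a, P a = 1)
    (ρ : Matrix n n ℂ) (hρ : ρ.PosSemidef) (htr : ρ.trace = 1)
    (d : ℕ) (hd : 1 ≤ d) (p : ℝ) (hp : 1 ≤ p) :
    schatten p (ρ ⊗ₖ Matrix.single (⟨0, hd⟩ : Fin d) ⟨0, hd⟩ (1 : ℂ)
        - (∑ a, P a * ρ * P a) ⊗ₖ ((d : ℂ)⁻¹ • (1 : Matrix (Fin d) (Fin d) ℂ))) ^ p
      = schatten p (ρ - (d : ℂ)⁻¹ • ∑ a, P a * ρ * P a) ^ p
        + ((d : ℝ) - 1) / (d : ℝ) ^ p * schatten p (∑ a, P a * ρ * P a) ^ p := by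
  classical
  have hd0 : (0 : ℝ) < (d : ℝ) := by exact_mod_cast Nat.lt_of_lt_of_le Nat.zero_lt_one hd
  have hp0 : (0 : ℝ) < p := lt_of_lt_of_le one_pos hp
  have hp0' : p ≠ 0 := ne_of_gt hp0
  set σ : Matrix n n ℂ := ∑ a, P a * ρ * P a with hσdef
  have hρH : ρ.IsHermitian := hρ.1
  have hσH : σ.IsHermitian := by
    show σᴴ = σ
    rw [hσdef, Matrix.conjTranspose_sum]
    refine Finset.sum_congr rfl fun a _ => ?_
    rw [Matrix.conjTranspose_mul, Matrix.conjTranspose_mul, hherm, hρH.eq, mul_assoc]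
  have hAH : (ρ - (d : ℂ)⁻¹ • σ).IsHermitian := by
    show _ᴴ = _
    rw [Matrix.conjTranspose_sub, Matrix.conjTranspose_smul, hρH.eq, hσH.eq]
    simp
  set Ua : Matrix n n ℂ := (Matrix.IsHermitian.eigenvectorUnitary hAH : Matrix n n ℂ) with hUa
  have hUam : Ua ∈ Matrix.unitaryGroup n ℂ :=
    (Matrix.IsHermitian.eigenvectorUnitary hAH).2
  set a : n → ℝ := hAH.eigenvalues with ha
  have hAeq : ρ - (d : ℂ)⁻¹ • σ = Ua * Matrix.diagonal ((↑) ∘ a : n → ℂ) * star Ua :=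
    hAH.spectral_theorem
  set V : Matrix n n ℂ := (Matrix.IsHermitian.eigenvectorUnitary hσH : Matrix n n ℂ) with hV
  have hVm : V ∈ Matrix.unitaryGroup n ℂ :=
    (Matrix.IsHermitian.eigenvectorUnitary hσH).2
  set b : n → ℝ := hσH.eigenvalues with hb
  have hσeq : σ = V * Matrix.diagonal ((↑) ∘ b : n → ℂ) * star V := hσH.spectral_theorem
  set c : n → ℝ := fun i => -(d : ℝ)⁻¹ * b i with hc
  have hBeq : (-(d : ℂ)⁻¹) • σ = V * Matrix.diagonal ((↑) ∘ c : n → ℂ) * star V := by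
    have h1 : Matrix.diagonal ((↑) ∘ c : n → ℂ)
        = (-(d : ℂ)⁻¹) • Matrix.diagonal ((↑) ∘ b : n → ℂ) := by
      ext i j
      rcases eq_or_ne i j with rfl | h
      · simp only [Matrix.diagonal_apply_eq, Function.comp_apply, Matrix.smul_apply,
          smul_eq_mul, hc]
        push_cast
        ring
      · simp [Matrix.diagonal_apply_ne _ h]
    rw [h1, Matrix.mul_smul, Matrix.smul_mul, ← hσeq]
  set z : Fin d := ⟨0, hd⟩ with hz
  set E : Matrix (Fin d) (Fin d) ℂ := Matrix.single z z 1 with hE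
  set Q : Matrix (Fin d) (Fin d) ℂ := 1 - E with hQ
  have hEE : E * E = E := by rw [hE, Matrix.single_mul_single_same, one_mul]
  have hEQ : E * Q = 0 := by rw [hQ, mul_sub, mul_one, hEE, sub_self]
  have hQE : Q * E = 0 := by rw [hQ, sub_mul, one_mul, hEE, sub_self]
  have hQQ : Q * Q = Q := by
    rw [hQ, sub_mul, one_mul, mul_sub, mul_one, hEE, sub_self, sub_zero]
  have hEH : Eᴴ = E := by
    ext i j
    simp [hE, Matrix.single, Matrix.conjTranspose_apply, apply_ite (star : ℂ → ℂ),
      and_comm]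
  have hQH : Qᴴ = Q := by rw [hQ, Matrix.conjTranspose_sub, Matrix.conjTranspose_one, hEH]
  set W : Matrix (n × Fin d) (n × Fin d) ℂ := Ua ⊗ₖ E + V ⊗ₖ Q with hW
  have hWstar : star W = star Ua ⊗ₖ E + star V ⊗ₖ Q := by
    rw [hW, Matrix.star_eq_conjTranspose, Matrix.conjTranspose_add, kron_conjTranspose,
      kron_conjTranspose, hEH, hQH, ← Matrix.star_eq_conjTranspose,
      ← Matrix.star_eq_conjTranspose]
  have hprod : ∀ X₁ X₂ Y₁ Y₂ : Matrix n n ℂ,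
      (X₁ ⊗ₖ E + X₂ ⊗ₖ Q) * (Y₁ ⊗ₖ E + Y₂ ⊗ₖ Q) = (X₁ * Y₁) ⊗ₖ E + (X₂ * Y₂) ⊗ₖ Q := by
    intro X₁ X₂ Y₁ Y₂
    rw [add_mul, mul_add, mul_add, ← Matrix.mul_kronecker_mul, ← Matrix.mul_kronecker_mul,
      ← Matrix.mul_kronecker_mul, ← Matrix.mul_kronecker_mul, hEE, hEQ, hQE, hQQ,
      Matrix.kronecker_zero, Matrix.kronecker_zero, add_zero, zero_add]
  have hEQ1 : (1 : Matrix n n ℂ) ⊗ₖ E + (1 : Matrix n n ℂ) ⊗ₖ Q = 1 := by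
    rw [← Matrix.kronecker_add]
    rw [show E + Q = 1 from by rw [hQ]; abel]
    rw [Matrix.one_kronecker_one]
  have hWU : W ∈ Matrix.unitaryGroup (n × Fin d) ℂ := by
    constructor
    · rw [hWstar, hW, hprod, hUam.1, hVm.1, hEQ1]
    · rw [hW, hWstar, hprod, hUam.2, hVm.2, hEQ1]
  set w : n × Fin d → ℝ := fun ij => if ij.2 = z then a ij.1 else c ij.1 with hw
  have hdiag : Matrix.diagonal ((↑) ∘ w : n × Fin d → ℂ)
      = Matrix.diagonal ((↑) ∘ a : n → ℂ) ⊗ₖ E + Matrix.diagonal ((↑) ∘ c : n → ℂ) ⊗ₖ Q := by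
    ext ⟨i, j⟩ ⟨i', j'⟩
    simp only [Matrix.diagonal_apply, Matrix.add_apply, Matrix.kroneckerMap_apply, hQ, hE,
      Matrix.sub_apply, Matrix.one_apply, Matrix.single, Matrix.of_apply,
      Function.comp_apply, Prod.mk.injEq, hw]
    rcases eq_or_ne i i' with rfl | hii
    · rcases eq_or_ne j j' with rfl | hjj
      · rcases eq_or_ne j z with rfl | hjz
        · simp
        · simp [hjz, Ne.symm hjz]
      · have hnz : ¬ (z = j ∧ z = j') := fun h => hjj (h.1.symm.trans h.2)
        simp [hjj, hnz]
    · simp [hii]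
  have hM : ρ ⊗ₖ E - σ ⊗ₖ ((d : ℂ)⁻¹ • 1)
      = W * Matrix.diagonal ((↑) ∘ w : n × Fin d → ℂ) * star W := by
    rw [hdiag, hWstar, hW, hprod, hprod, ← hAeq, ← hBeq]
    ext ⟨i, j⟩ ⟨i', j'⟩
    simp only [Matrix.sub_apply, Matrix.add_apply, Matrix.kroneckerMap_apply, Matrix.smul_apply,
      hQ, Matrix.one_apply, smul_eq_mul, neg_mul]
    ring
  have k1 : traceAbsPow p (ρ - (d : ℂ)⁻¹ • σ) = ∑ i, |a i| ^ p :=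
    traceAbsPow_conj_diagonal Ua hUam a p hAeq
  have k2 : traceAbsPow p σ = ∑ i, |b i| ^ p :=
    traceAbsPow_conj_diagonal V hVm b p hσeq
  have k3 : traceAbsPow p (ρ ⊗ₖ E - σ ⊗ₖ ((d : ℂ)⁻¹ • 1)) = ∑ ij, |w ij| ^ p :=
    traceAbsPow_conj_diagonal W hWU w p hM
  rw [schatten_rpow_eq hp0' _ k3
      (Finset.sum_nonneg fun ij _ => Real.rpow_nonneg (abs_nonneg _) p),
    schatten_rpow_eq hp0' _ k1
      (Finset.sum_nonneg fun i _ => Real.rpow_nonneg (abs_nonneg _) p),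
    schatten_rpow_eq hp0' _ k2
      (Finset.sum_nonneg fun i _ => Real.rpow_nonneg (abs_nonneg _) p)]
  rw [Fintype.sum_prod_type]
  have hinner : ∀ i, (∑ j : Fin d, |w (i, j)| ^ p)
      = |a i| ^ p + ((d : ℝ) - 1) / (d : ℝ) ^ p * |b i| ^ p := by
    intro i
    rw [← Finset.add_sum_erase _ _ (Finset.mem_univ z)]
    have h1 : w (i, z) = a i := by simp [hw]
    have h2 : ∀ j ∈ Finset.univ.erase z, |w (i, j)| ^ p = (d : ℝ)⁻¹ ^ p * |b i| ^ p := by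
      intro j hj
      have hjz : w (i, j) = c i := by simp [hw, (Finset.mem_erase.mp hj).1]
      have hci : c i = -(d : ℝ)⁻¹ * b i := rfl
      rw [hjz, hci]
      rw [show -(d : ℝ)⁻¹ * b i = -((d : ℝ)⁻¹ * b i) from by ring, abs_neg, abs_mul,
        abs_of_nonneg (inv_nonneg.mpr hd0.le),
        Real.mul_rpow (inv_nonneg.mpr hd0.le) (abs_nonneg _)]
    rw [Finset.sum_congr rfl h2, Finset.sum_const,
      Finset.card_erase_of_mem (Finset.mem_univ z), Finset.card_univ, Fintype.card_fin,
      h1, nsmul_eq_mul]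
    have hcast : ((d - 1 : ℕ) : ℝ) = (d : ℝ) - 1 := by
      push_cast [Nat.cast_sub hd]
      ring
    rw [hcast, Real.inv_rpow hd0.le]
    ring
  rw [Finset.sum_congr rfl fun i _ => hinner i, Finset.sum_add_distrib, ← Finset.mul_sum]

end
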